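/- There is no real number Y satisfying simultaneously Y + 1/12 = 0 and Y² + Y/4 + 1/80 = 0. Consequently, since the phase error of a two-stage minimal-dissipation scheme expands as φ(σ) = (Y + 1/12)σ³ + (Y² + Y/4 + 1/80)σ⁵ + O(σ⁷), no choice of Y makes both the σ³ and σ⁵ coefficients vanish, so the dispersive order of such a scheme never exceeds four. -/
import Mathlib

open Asymptotics Filter Real Set

lemma arctan_cubic (x : ℝ) : |Real.arctan x - (x - x^3/3 + x^5/5)| ≤ |x|^7 := by
  set g : ℝ → ℝ := fun t => Real.arctan t - (t - t^3/3 + t^5/5) with hgdef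
  have hd : ∀ t : ℝ, HasDerivAt g (1/(1+t^2) - (1 - (3*t^2)/3 + (5*t^4)/5)) t := by
    intro t
    exact (Real.hasDerivAt_arctan t).sub
      (((hasDerivAt_id t).sub ((hasDerivAt_pow 3 t).div_const 3)).add
        ((hasDerivAt_pow 5 t).div_const 5))
  have hbound : ∀ t ∈ Icc (-|x|) |x|, ‖1/(1+t^2) - (1 - (3*t^2)/3 + (5*t^4)/5)‖ ≤ |x|^6 := by
    intro t ht
    have h1 : (0:ℝ) < 1 + t^2 := by positivity
    have heq : 1/(1+t^2) - (1 - (3*t^2)/3 + (5*t^4)/5) = -(t^6/(1+t^2)) := by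
      field_simp; ring
    rw [heq, norm_neg, Real.norm_eq_abs, abs_of_nonneg (by positivity)]
    have h2 : t^6/(1+t^2) ≤ t^6 := by
      apply div_le_self (by positivity); linarith [sq_nonneg t]
    have h3 : t^6 ≤ |x|^6 := by
      calc t^6 = |t|^6 := (abs_pow t 6).symm ▸ (abs_of_nonneg (by positivity)).symm
      _ ≤ |x|^6 := by
        apply pow_le_pow_left₀ (abs_nonneg t)
        rw [abs_le]; exact ⟨ht.1, ht.2⟩
    linarith
  have hmem : x ∈ Icc (-|x|) |x| := ⟨neg_abs_le x, le_abs_self x⟩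
  have hmem0 : (0:ℝ) ∈ Icc (-|x|) |x| := ⟨neg_nonpos.2 (abs_nonneg x), abs_nonneg x⟩
  have := Convex.norm_image_sub_le_of_norm_hasDerivWithin_le
    (f := g) (f' := fun t => 1/(1+t^2) - (1 - (3*t^2)/3 + (5*t^4)/5))
    (fun t _ => (hd t).hasDerivWithinAt) hbound (convex_Icc _ _) hmem0 hmem
  have hg0 : g 0 = 0 := by simp [hgdef]
  rw [hg0, sub_zero, sub_zero, Real.norm_eq_abs, Real.norm_eq_abs] at this
  calc |g x| ≤ |x|^6 * |x| := this
  _ = |x|^7 := by ring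

lemma phi_tendsto (Y : ℝ) (n : ℕ) (hn : n ≤ 6) (h : ℝ → ℝ) (hh : ContinuousAt h 0)
    (heq : ∀ σ : ℝ, σ ≠ 0 → (1/2 : ℝ) ≤ 1 + σ^2*Y →
      (σ - 2*((σ/2)/(1+σ^2*Y) - ((σ/2)/(1+σ^2*Y))^3/3 + ((σ/2)/(1+σ^2*Y))^5/5))/σ^n = h σ) :
    Tendsto (fun σ : ℝ => (σ - 2*Real.arctan ((σ/2)/(1+σ^2*Y)))/σ^n)
      (nhdsWithin (0:ℝ) {0}ᶜ) (nhds (h 0)) := by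
  -- eventually, 1 + σ²Y ≥ 1/2 and |u| ≤ |σ|
  have hev : ∀ᶠ σ : ℝ in nhdsWithin (0:ℝ) {0}ᶜ,
      σ ≠ 0 ∧ (1/2 : ℝ) ≤ 1 + σ^2*Y := by
    have hc : Tendsto (fun σ : ℝ => 1 + σ^2*Y) (nhds 0) (nhds 1) := by
      have : Continuous (fun σ : ℝ => 1 + σ^2*Y) := by continuity
      simpa using this.tendsto 0
    have h2 : ∀ᶠ σ : ℝ in nhds (0:ℝ), (1/2 : ℝ) ≤ 1 + σ^2*Y :=
      hc.eventually (eventually_ge_nhds (by norm_num))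
    filter_upwards [eventually_mem_nhdsWithin, nhdsWithin_le_nhds h2] with σ h1 h2
    exact ⟨h1, h2⟩
  set u : ℝ → ℝ := fun σ => (σ/2)/(1+σ^2*Y) with hu
  have key : ∀ᶠ σ : ℝ in nhdsWithin (0:ℝ) {0}ᶜ,
      (σ - 2*Real.arctan (u σ))/σ^n
        = h σ - 2*(Real.arctan (u σ) - (u σ - (u σ)^3/3 + (u σ)^5/5))/σ^n := by
    filter_upwards [hev] with σ ⟨hσ, hD⟩
    rw [← heq σ hσ hD, div_sub_div_same]
    congr 1
    ring
  rw [tendsto_congr' key]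
  have hherr : Tendsto
      (fun σ : ℝ => 2*(Real.arctan (u σ) - (u σ - (u σ)^3/3 + (u σ)^5/5))/σ^n)
      (nhdsWithin (0:ℝ) {0}ᶜ) (nhds 0) := by
    apply squeeze_zero_norm' (a := fun σ : ℝ => 2*|σ|^(7-n))
    · filter_upwards [hev] with σ ⟨hσ, hD⟩
      have hDpos : (0:ℝ) < 1 + σ^2*Y := by linarith
      have hule : |u σ| ≤ |σ| := by
        rw [hu]
        rw [abs_div, abs_of_pos hDpos, abs_div]
        rw [div_div]
        apply div_le_self (abs_nonneg σ)
        have : (1:ℝ) ≤ |2| * (1 + σ^2*Y) := by rw [abs_of_pos]; linarith; norm_num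
        linarith
      have h1 : |Real.arctan (u σ) - (u σ - (u σ)^3/3 + (u σ)^5/5)| ≤ |σ|^7 :=
        le_trans (arctan_cubic (u σ)) (pow_le_pow_left₀ (abs_nonneg _) hule 7)
      rw [Real.norm_eq_abs, abs_div, abs_mul, abs_pow]
      rw [div_le_iff₀' (by positivity : (0:ℝ) < |σ|^n)]
      have : |σ|^n * (2*|σ|^(7-n)) = 2 * (|σ|^n * |σ|^(7-n)) := by ring
      rw [this, ← pow_add]
      have h7 : n + (7 - n) = 7 := by omega
      rw [h7]
      have : |(2:ℝ)| = 2 := by norm_num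
      rw [this]
      linarith
    · have hc : Tendsto (fun σ : ℝ => 2*|σ|^(7-n)) (nhds 0) (nhds (2*|(0:ℝ)|^(7-n))) := by
        exact (continuous_const.mul (continuous_abs.pow _)).tendsto 0
      rw [abs_zero, zero_pow (by omega), mul_zero] at hc
      exact hc.mono_left nhdsWithin_le_nhds
  have hhc : Tendsto h (nhdsWithin (0:ℝ) {0}ᶜ) (nhds (h 0)) :=
    hh.continuousWithinAt.tendsto
  simpa using hhc.sub hherr

lemma O_tendsto (φ : ℝ → ℝ) (hO : φ =O[nhds (0:ℝ)] fun σ : ℝ => σ^6)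
    (n : ℕ) (hn : n ≤ 5) :
    Tendsto (fun σ : ℝ => φ σ / σ^n) (nhdsWithin (0:ℝ) {0}ᶜ) (nhds 0) := by
  have h1 : (fun σ : ℝ => φ σ / σ^n) =O[nhdsWithin (0:ℝ) {0}ᶜ]
      fun σ : ℝ => σ^6 * (σ^n)⁻¹ := by
    simpa [div_eq_mul_inv] using
      (hO.mono nhdsWithin_le_nhds).mul (isBigO_refl (fun σ : ℝ => (σ^n)⁻¹) _)
  apply h1.trans_tendsto
  have hev : ∀ᶠ σ : ℝ in nhdsWithin (0:ℝ) {0}ᶜ, σ^(6-n) = σ^6 * (σ^n)⁻¹ := by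
    filter_upwards [eventually_mem_nhdsWithin] with σ hσ
    rw [pow_sub₀ σ hσ (hn.trans (by norm_num))]
  have ht : Tendsto (fun σ : ℝ => σ^(6-n)) (nhdsWithin (0:ℝ) {0}ᶜ) (nhds 0) := by
    have hc : Tendsto (fun σ : ℝ => σ^(6-n)) (nhds (0:ℝ)) (nhds ((0:ℝ)^(6-n))) :=
      (continuous_pow _).tendsto 0
    rw [zero_pow (by omega)] at hc
    exact hc.mono_left nhdsWithin_le_nhds
  exact ht.congr' hev


/-- No real `Y` annihilates both the `σ³` and the `σ⁵`
coefficients of the two-stage phase error expansion; consequently, for no `Y`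
is the phase error `σ − 2·arctan((σ/2)/(1 + σ²Y))` of order `O(σ⁶)`, i.e. the
dispersive order of a two-stage minimal-dissipation scheme never exceeds four. -/
theorem two_stage_dispersive_order_at_most_four :
    (¬ ∃ Y : ℝ, Y + 1 / 12 = 0 ∧ Y ^ 2 + Y / 4 + 1 / 80 = 0)
    ∧ ∀ Y : ℝ,
      ¬ ((fun σ : ℝ => σ - 2 * Real.arctan ((σ / 2) / (1 + σ ^ 2 * Y)))
        =O[nhds 0] (fun σ : ℝ => σ ^ 6)) := by
  constructor
  · rintro ⟨Y, h1, h2⟩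
    have hY : Y = -(1/12) := by linarith
    rw [hY] at h2
    norm_num at h2
  · intro Y hO
    have h3 := phi_tendsto Y 3 (by norm_num)
      (fun σ => (Y*(1+σ^2*Y)^4 + (1+σ^2*Y)^2/12 - σ^2/80)/(1+σ^2*Y)^5)
      (by apply ContinuousAt.div
          · fun_prop
          · fun_prop
          · norm_num)
      (by intro σ hσ hD
          have hD0 : (1+σ^2*Y) ≠ 0 := ne_of_gt (by linarith)
          field_simp
          ring)
    have z3 := O_tendsto _ hO 3 (by norm_num)
    have e3 := tendsto_nhds_unique h3 z3
    norm_num at e3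
    have hY : Y = -(1/12) := by linarith
    subst hY
    have h5 := phi_tendsto (-(1/12)) 5 (by norm_num)
      (fun σ => ((1 - σ^2/12)^2*(2 - σ^2/12)/144 - 1/80)/(1 - σ^2/12)^5)
      (by apply ContinuousAt.div
          · fun_prop
          · fun_prop
          · norm_num)
      (by intro σ hσ hD
          have hD0 : (1 - σ^2/12) ≠ 0 := ne_of_gt (by linarith)
          have he : (1 + σ^2*(-(1/12))) = 1 - σ^2/12 := by ring
          rw [he]
          have h12 : (12 - σ^2) ≠ 0 := by intro hc; apply hD0; linarith
          field_simp
          ring)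
    have z5 := O_tendsto _ hO 5 (by norm_num)
    have e5 := tendsto_nhds_unique h5 z5
    norm_num at e5
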